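/- For n ≥ 8, the Q-index of the graph S_{n,3} is the largest real root of the polynomial φ₁(x,n) = x³ − n·x² + (3n − 8)·x − n. -/

import Mathlib

open SimpleGraph

/-- The degree of a vertex (with classical decidability). -/
noncomputable def deg {V : Type*} [Fintype V] (G : SimpleGraph V) (v : V) : ℕ :=
  letI := Classical.decEq V
  letI := Classical.decRel G.Adj
  G.degree v

/-- The signless Laplacian matrix `Q(G) = D(G) + A(G)` of a graph. -/
noncomputable def signlessLaplacian {V : Type*} [Fintype V] (G : SimpleGraph V) :
    Matrix V V ℝ :=
  letI := Classical.decEq V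
  letI := Classical.decRel G.Adj
  Matrix.diagonal (fun v => (G.degree v : ℝ)) + G.adjMatrix ℝ

/-- The `Q`-index of a graph: the largest eigenvalue of its signless Laplacian. -/
noncomputable def qIndex {V : Type*} [Fintype V] (G : SimpleGraph V) : ℝ :=
  sSup {μ : ℝ | ∃ x : V → ℝ, x ≠ 0 ∧ (signlessLaplacian G).mulVec x = μ • x}

/-- The maximum degree `Δ(G)` (with classical decidability). -/
noncomputable def maxDeg {V : Type*} [Fintype V] (G : SimpleGraph V) : ℕ :=
  letI := Classical.decEq V
  letI := Classical.decRel G.Adj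
  G.maxDegree

/-- The number of edges (the size) of a graph. -/
noncomputable def edgeCount {V : Type*} (G : SimpleGraph V) : ℕ := G.edgeSet.ncard

/-- `graphS3 n` : the tree `S_{n,3}` on `n` vertices, obtained from the star `K_{1,n-7}`
(center `0`, leaves `1,…,n-7`) by attaching three pendant paths of length 2,
namely `0 — (n-6) — (n-5)`, `0 — (n-4) — (n-3)` and `0 — (n-2) — (n-1)`, at the center. -/
def graphS3 (n : ℕ) : SimpleGraph (Fin n) :=
  SimpleGraph.fromRel (fun u v =>
    (u.val = 0 ∧ ((1 ≤ v.val ∧ v.val ≤ n - 7) ∨ v.val = n - 6 ∨ v.val = n - 4 ∨ v.val = n - 2)) ∨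
    (u.val = n - 6 ∧ v.val = n - 5) ∨ (u.val = n - 4 ∧ v.val = n - 3) ∨
    (u.val = n - 2 ∧ v.val = n - 1))

namespace QS3

lemma sl_mulVec {V : Type*} [Fintype V] [DecidableEq V] (G : SimpleGraph V)
    [DecidableRel G.Adj] (x : V → ℝ) (u : V) :
    (signlessLaplacian G).mulVec x u
      = ∑ w, if G.Adj u w then (x u + x w) else 0 := by
  classical
  have hQ : signlessLaplacian G = Matrix.diagonal (fun v => (G.degree v : ℝ)) + G.adjMatrix ℝ := by
    unfold signlessLaplacian; congr!
  rw [hQ, Matrix.add_mulVec]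
  simp only [Pi.add_apply]
  have h1 : (Matrix.diagonal (fun v => (G.degree v : ℝ))).mulVec x u = (G.degree u : ℝ) * x u := by
    simp [Matrix.mulVec_diagonal]
  have h2 : (G.adjMatrix ℝ).mulVec x u = ∑ w ∈ G.neighborFinset u, x w := by
    convert SimpleGraph.adjMatrix_mulVec_apply G u x using 2
  rw [h1, h2]
  have h3 : ∑ w, (if G.Adj u w then (x u + x w) else 0)
      = ∑ w ∈ G.neighborFinset u, (x u + x w) := by
    rw [Finset.sum_ite, Finset.sum_const_zero, add_zero]
    apply Finset.sum_congr _ (fun _ _ => rfl)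
    ext w
    simp [SimpleGraph.neighborFinset_def, SimpleGraph.mem_neighborSet]
  rw [h3, Finset.sum_add_distrib, Finset.sum_const, SimpleGraph.card_neighborFinset_eq_degree,
    nsmul_eq_mul]

variable {n : ℕ}

lemma adj0 (hn : 8 ≤ n) (u w : Fin n) (hu : u.val = 0) :
    (graphS3 n).Adj u w ↔ (1 ≤ w.val ∧ w.val ≤ n-7) ∨ w.val = n-6 ∨ w.val = n-4 ∨ w.val = n-2 := by
  have := u.isLt; have := w.isLt
  simp only [graphS3, SimpleGraph.fromRel_adj, ne_eq, Fin.ext_iff]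
  constructor
  · rintro ⟨hne, (⟨h1,h2⟩|⟨h1,h2⟩|⟨h1,h2⟩|⟨h1,h2⟩)|(⟨h1,h2⟩|⟨h1,h2⟩|⟨h1,h2⟩|⟨h1,h2⟩)⟩ <;> omega
  · intro h
    exact ⟨by omega, Or.inl (Or.inl ⟨hu, by omega⟩)⟩

lemma adj_leaf (hn : 8 ≤ n) (u w : Fin n) (hu : 1 ≤ u.val ∧ u.val ≤ n-7) :
    (graphS3 n).Adj u w ↔ w.val = 0 := by
  have := u.isLt; have := w.isLt
  simp only [graphS3, SimpleGraph.fromRel_adj, ne_eq, Fin.ext_iff]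
  constructor
  · rintro ⟨hne, (⟨h1,h2⟩|⟨h1,h2⟩|⟨h1,h2⟩|⟨h1,h2⟩)|(⟨h1,h2⟩|⟨h1,h2⟩|⟨h1,h2⟩|⟨h1,h2⟩)⟩ <;> omega
  · intro h
    exact ⟨by omega, Or.inr (Or.inl ⟨h, Or.inl (by omega)⟩)⟩

lemma adj_mid (hn : 8 ≤ n) (u w : Fin n) (k : ℕ) (hk : k = n-6 ∨ k = n-4 ∨ k = n-2)
    (hu : u.val = k) : (graphS3 n).Adj u w ↔ w.val = 0 ∨ w.val = k+1 := by
  have := u.isLt; have := w.isLt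
  simp only [graphS3, SimpleGraph.fromRel_adj, ne_eq, Fin.ext_iff]
  constructor
  · rintro ⟨hne, (⟨h1,h2⟩|⟨h1,h2⟩|⟨h1,h2⟩|⟨h1,h2⟩)|(⟨h1,h2⟩|⟨h1,h2⟩|⟨h1,h2⟩|⟨h1,h2⟩)⟩ <;> omega
  · rintro (h | h)
    · exact ⟨by omega, Or.inr (Or.inl ⟨h, by omega⟩)⟩
    · rcases hk with rfl | rfl | rfl
      · exact ⟨by omega, Or.inl (Or.inr (Or.inl ⟨hu, by omega⟩))⟩
      · exact ⟨by omega, Or.inl (Or.inr (Or.inr (Or.inl ⟨hu, by omega⟩)))⟩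
      · exact ⟨by omega, Or.inl (Or.inr (Or.inr (Or.inr ⟨hu, by omega⟩)))⟩

lemma adj_pend (hn : 8 ≤ n) (u w : Fin n) (k : ℕ) (hk : k = n-6 ∨ k = n-4 ∨ k = n-2)
    (hu : u.val = k+1) : (graphS3 n).Adj u w ↔ w.val = k := by
  have := u.isLt; have := w.isLt
  simp only [graphS3, SimpleGraph.fromRel_adj, ne_eq, Fin.ext_iff]
  constructor
  · rintro ⟨hne, (⟨h1,h2⟩|⟨h1,h2⟩|⟨h1,h2⟩|⟨h1,h2⟩)|(⟨h1,h2⟩|⟨h1,h2⟩|⟨h1,h2⟩|⟨h1,h2⟩)⟩ <;> omega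
  · intro h
    rcases hk with rfl | rfl | rfl
    · exact ⟨by omega, Or.inr (Or.inr (Or.inl ⟨by omega, by omega⟩))⟩
    · exact ⟨by omega, Or.inr (Or.inr (Or.inr (Or.inl ⟨by omega, by omega⟩)))⟩
    · exact ⟨by omega, Or.inr (Or.inr (Or.inr (Or.inr ⟨by omega, by omega⟩)))⟩

lemma classify (hn : 8 ≤ n) (u : Fin n) :
    u.val = 0 ∨ (1 ≤ u.val ∧ u.val ≤ n-7) ∨ (u.val = n-6 ∨ u.val = n-4 ∨ u.val = n-2)
      ∨ (u.val = n-6+1 ∨ u.val = n-4+1 ∨ u.val = n-2+1) := by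
  have := u.isLt; omega

lemma sum_single (t : Fin n) (f : Fin n → ℝ) (p : Fin n → Prop) [DecidablePred p]
    (hp : ∀ w, p w ↔ w = t) :
    ∑ w : Fin n, (if p w then f w else 0) = f t := by
  classical
  rw [Finset.sum_congr rfl (fun w _ => by rw [if_congr (hp w) rfl rfl])]
  simp

lemma sum_pair (t s : Fin n) (hts : t ≠ s) (f : Fin n → ℝ) (p : Fin n → Prop) [DecidablePred p]
    (hp : ∀ w, p w ↔ (w = t ∨ w = s)) :
    ∑ w : Fin n, (if p w then f w else 0) = f t + f s := by
  classical
  have : ∀ w : Fin n, (if p w then f w else 0)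
      = (if w = t then f w else 0) + (if w = s then f w else 0) := by
    intro w
    by_cases h1 : w = t <;> by_cases h2 : w = s <;>
      simp [h1, h2, hp, hts] <;> simp_all
  rw [Finset.sum_congr rfl (fun w _ => this w), Finset.sum_add_distrib]
  simp

lemma sum_center (hn : 8 ≤ n) (X Y : ℝ) (g : Fin n → ℝ)
    (hg : ∀ w : Fin n, g w = if 1 ≤ w.val ∧ w.val ≤ n-7 then X
        else if w.val = n-6 ∨ w.val = n-4 ∨ w.val = n-2 then Y else 0) :
    ∑ w : Fin n, g w = ((n:ℝ) - 7) * X + 3 * Y := by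
  classical
  have step1 : ∑ w : Fin n, g w
      = ∑ i ∈ Finset.range n, ((if i ∈ Finset.Ico 1 (n-6) then X else 0)
          + (if i ∈ ({n-6, n-4, n-2} : Finset ℕ) then Y else 0)) := by
    rw [← Fin.sum_univ_eq_sum_range]
    refine Finset.sum_congr rfl (fun w _ => ?_)
    rw [hg w]
    have hw := w.isLt
    simp only [Finset.mem_Ico, Finset.mem_insert, Finset.mem_singleton]
    split_ifs
    all_goals try ring
    all_goals (exfalso; omega)
  rw [step1, Finset.sum_add_distrib]
  have c1 : ∑ i ∈ Finset.range n, (if i ∈ Finset.Ico 1 (n-6) then X else 0)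
      = ((n:ℝ) - 7) * X := by
    rw [Finset.sum_ite_mem]
    rw [Finset.inter_eq_right.2 (by intro i hi; simp [Finset.mem_Ico] at hi ⊢; omega)]
    rw [Finset.sum_const, Nat.card_Ico, nsmul_eq_mul]
    rw [show n - 6 - 1 = n - 7 from by omega, Nat.cast_sub (by omega : 7 ≤ n)]
    norm_num
  have c2 : ∑ i ∈ Finset.range n, (if i ∈ ({n-6, n-4, n-2} : Finset ℕ) then Y else 0)
      = 3 * Y := by
    rw [Finset.sum_ite_mem]
    rw [Finset.inter_eq_right.2 (by intro i hi; simp at hi ⊢; omega)]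
    rw [Finset.sum_const, nsmul_eq_mul]
    have : ({n-6, n-4, n-2} : Finset ℕ).card = 3 := by
      rw [Finset.card_insert_of_notMem (by simp; omega),
         Finset.card_insert_of_notMem (by simp; omega), Finset.card_singleton]
    rw [this]; norm_num
  linarith [c1, c2]

/-- the explicit eigenvector -/
noncomputable def vec (n : ℕ) (a b c d : ℝ) : Fin n → ℝ := fun w =>
  if w.val = 0 then a else if w.val ≤ n-7 then b
  else if w.val = n-6 ∨ w.val = n-4 ∨ w.val = n-2 then c else d

lemma vec_zero (hn : 8 ≤ n) {a b c d : ℝ} (w : Fin n) (h : w.val = 0) : vec n a b c d w = a := by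
  unfold vec; rw [if_pos h]

lemma vec_leaf (hn : 8 ≤ n) {a b c d : ℝ} (w : Fin n) (h1 : 1 ≤ w.val) (h2 : w.val ≤ n-7) :
    vec n a b c d w = b := by
  unfold vec; rw [if_neg (by omega), if_pos h2]

lemma vec_mid (hn : 8 ≤ n) {a b c d : ℝ} (w : Fin n)
    (h : w.val = n-6 ∨ w.val = n-4 ∨ w.val = n-2) : vec n a b c d w = c := by
  unfold vec; rw [if_neg (by omega), if_neg (by omega), if_pos h]

lemma vec_pend (hn : 8 ≤ n) {a b c d : ℝ} (w : Fin n)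
    (h : w.val = n-6+1 ∨ w.val = n-4+1 ∨ w.val = n-2+1) : vec n a b c d w = d := by
  unfold vec; rw [if_neg (by omega), if_neg (by omega), if_neg (by omega)]

lemma mem_eig (hn : 8 ≤ n) (r : ℝ) (hr3 : 3 < r)
    (hroot : r^3 - (n:ℝ)*r^2 + (3*(n:ℝ)-8)*r - (n:ℝ) = 0) :
    ∃ x : Fin n → ℝ, x ≠ 0 ∧ (signlessLaplacian (graphS3 n)).mulVec x = r • x := by
  classical
  letI : DecidableRel (graphS3 n).Adj := Classical.decRel _
  have h1 : r - 1 ≠ 0 := by linarith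
  have ht0 : (0 : ℕ) < n := by omega
  refine ⟨vec n ((r^2-3*r+1)*(r-1)) (r^2-3*r+1) ((r-1)^2) (r-1), ?_, ?_⟩
  · intro h0
    have := congrFun h0 ⟨n-1, by omega⟩
    rw [vec_pend hn _ (by simp only [Fin.val_mk]; omega)] at this
    simp only [Pi.zero_apply] at this
    exact h1 (by linarith [this])
  · funext u
    rw [sl_mulVec, Pi.smul_apply, smul_eq_mul]
    set x : Fin n → ℝ := vec n ((r^2-3*r+1)*(r-1)) (r^2-3*r+1) ((r-1)^2) (r-1) with hx
    rcases classify hn u with hu | hu | hu | hu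
    · -- center
      have hxu : x u = (r^2-3*r+1)*(r-1) := vec_zero hn u hu
      have hsum : ∑ w, (if (graphS3 n).Adj u w then (x u + x w) else 0)
          = ((n:ℝ) - 7) * ((r^2-3*r+1)*(r-1) + (r^2-3*r+1))
            + 3 * ((r^2-3*r+1)*(r-1) + (r-1)^2) := by
        apply sum_center hn
        intro w
        rw [if_congr (adj0 hn u w hu) rfl rfl]
        by_cases hL : 1 ≤ w.val ∧ w.val ≤ n-7
        · rw [if_pos (Or.inl hL), if_pos hL, hxu, hx, vec_leaf hn w hL.1 hL.2]
        · rw [if_neg hL]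
          by_cases hM : w.val = n-6 ∨ w.val = n-4 ∨ w.val = n-2
          · rw [if_pos (Or.inr hM), if_pos hM, hxu, hx, vec_mid hn w hM]
          · rw [if_neg (by tauto), if_neg hM]
      rw [hsum, hxu]
      linear_combination (-r) * hroot
    · -- leaf
      have hsum : ∑ w, (if (graphS3 n).Adj u w then (x u + x w) else 0)
          = x u + x ⟨0, ht0⟩ := by
        apply sum_single ⟨0, ht0⟩
        intro w
        rw [adj_leaf hn u w hu, Fin.ext_iff]
      rw [hsum, hx, vec_leaf hn u hu.1 hu.2, vec_zero hn _ rfl]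
      ring
    · -- middle
      obtain ⟨k, hk, huk⟩ : ∃ k, (k = n-6 ∨ k = n-4 ∨ k = n-2) ∧ u.val = k := ⟨u.val, hu, rfl⟩
      have hk1lt : k + 1 < n := by omega
      have hsum : ∑ w, (if (graphS3 n).Adj u w then (x u + x w) else 0)
          = (x u + x ⟨0, ht0⟩) + (x u + x ⟨k+1, hk1lt⟩) := by
        apply sum_pair ⟨0, ht0⟩ ⟨k+1, hk1lt⟩ (Fin.ne_of_val_ne (by simp only [Fin.val_mk]; omega))
        intro w
        rw [adj_mid hn u w k hk huk, Fin.ext_iff, Fin.ext_iff]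
      rw [hsum, hx, vec_mid hn u hu, vec_zero hn _ rfl,
        vec_pend hn _ (by simp only [Fin.val_mk]; omega)]
      ring
    · -- pendant
      obtain ⟨k, hk, huk⟩ : ∃ k, (k = n-6 ∨ k = n-4 ∨ k = n-2) ∧ u.val = k + 1 := by
        rcases hu with h|h|h
        exacts [⟨n-6, Or.inl rfl, h⟩, ⟨n-4, Or.inr (Or.inl rfl), h⟩, ⟨n-2, Or.inr (Or.inr rfl), h⟩]
      have hklt : k < n := by omega
      have hsum : ∑ w, (if (graphS3 n).Adj u w then (x u + x w) else 0)
          = x u + x ⟨k, hklt⟩ := by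
        apply sum_single ⟨k, hklt⟩
        intro w
        rw [adj_pend hn u w k hk huk, Fin.ext_iff]
      rw [hsum, hx, vec_pend hn u hu, vec_mid hn _ (by simp only [Fin.val_mk]; exact hk)]
      ring

lemma eig_bound (hn : 8 ≤ n) (μ : ℝ) (x : Fin n → ℝ) (hx : x ≠ 0)
    (heq : (signlessLaplacian (graphS3 n)).mulVec x = μ • x) :
    μ ≤ 3 ∨ μ^3 - (n:ℝ)*μ^2 + (3*(n:ℝ)-8)*μ - (n:ℝ) = 0 := by
  classical
  letI : DecidableRel (graphS3 n).Adj := Classical.decRel _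
  by_cases hμ3 : μ ≤ 3
  · exact Or.inl hμ3
  right
  push_neg at hμ3
  have h1 : μ - 1 ≠ 0 := by linarith
  have hs : 0 < μ^2 - 3*μ + 1 := by nlinarith
  have hs' : μ^2 - 3*μ + 1 ≠ 0 := ne_of_gt hs
  have ht0 : (0:ℕ) < n := by omega
  have h : ∀ u : Fin n, ∑ w, (if (graphS3 n).Adj u w then (x u + x w) else 0) = μ * x u := by
    intro u
    rw [← sl_mulVec, heq, Pi.smul_apply, smul_eq_mul]
  have hleaf : ∀ w : Fin n, 1 ≤ w.val → w.val ≤ n-7 → x w = x ⟨0, ht0⟩ / (μ - 1) := by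
    intro w h1' h2'
    have hw := h w
    rw [sum_single ⟨0, ht0⟩ _ _
      (fun v => by rw [adj_leaf hn w v ⟨h1', h2'⟩, Fin.ext_iff])] at hw
    rw [eq_div_iff h1]
    linear_combination (-1 : ℝ) * hw
  have hpath : ∀ k (hk : k = n-6 ∨ k = n-4 ∨ k = n-2) (hklt : k < n) (hk1lt : k+1 < n),
      x ⟨k, hklt⟩ = (μ - 1) * x ⟨0, ht0⟩ / (μ^2 - 3*μ + 1)
        ∧ x ⟨k+1, hk1lt⟩ = x ⟨0, ht0⟩ / (μ^2 - 3*μ + 1) := by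
    intro k hk hklt hk1lt
    have hp := h ⟨k+1, hk1lt⟩
    rw [sum_single ⟨k, hklt⟩ _ _
      (fun v => by rw [adj_pend hn _ v k hk rfl, Fin.ext_iff])] at hp
    have hm := h ⟨k, hklt⟩
    rw [sum_pair ⟨0, ht0⟩ ⟨k+1, hk1lt⟩ (Fin.ne_of_val_ne (by simp only [Fin.val_mk]; omega)) _ _
      (fun v => by rw [adj_mid hn _ v k hk rfl, Fin.ext_iff, Fin.ext_iff])] at hm
    constructor
    · rw [eq_div_iff hs']
      linear_combination (-1 : ℝ) * hp + (1 - μ) * hm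
    · rw [eq_div_iff hs']
      linear_combination (2 - μ) * hp - hm
  have hz0 : x ⟨0, ht0⟩ ≠ 0 := by
    intro h0
    apply hx
    funext u
    show x u = 0
    rcases classify hn u with hu | hu | hu | hu
    · rw [show u = ⟨0, ht0⟩ from Fin.ext hu]; exact h0
    · rw [hleaf u hu.1 hu.2, h0, zero_div]
    · obtain ⟨k, hk, huk⟩ : ∃ k, (k = n-6 ∨ k = n-4 ∨ k = n-2) ∧ u.val = k := ⟨u.val, hu, rfl⟩
      rw [show u = ⟨k, by omega⟩ from Fin.ext huk,
        (hpath k hk (by omega) (by omega)).1, h0, mul_zero, zero_div]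
    · obtain ⟨k, hk, huk⟩ : ∃ k, (k = n-6 ∨ k = n-4 ∨ k = n-2) ∧ u.val = k + 1 := by
        rcases hu with h'|h'|h'
        exacts [⟨n-6, Or.inl rfl, h'⟩, ⟨n-4, Or.inr (Or.inl rfl), h'⟩,
          ⟨n-2, Or.inr (Or.inr rfl), h'⟩]
      rw [show u = ⟨k+1, by omega⟩ from Fin.ext huk,
        (hpath k hk (by omega) (by omega)).2, h0, zero_div]
  have hc := h ⟨0, ht0⟩
  rw [sum_center hn (x ⟨0, ht0⟩ + x ⟨0, ht0⟩/(μ-1))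
      (x ⟨0, ht0⟩ + (μ-1) * x ⟨0, ht0⟩/(μ^2-3*μ+1)) _ ?hg] at hc
  case hg =>
    intro w
    rw [if_congr (adj0 hn _ w rfl) rfl rfl]
    by_cases hL : 1 ≤ w.val ∧ w.val ≤ n-7
    · rw [if_pos (Or.inl hL), if_pos hL, hleaf w hL.1 hL.2]
    · rw [if_neg hL]
      by_cases hM : w.val = n-6 ∨ w.val = n-4 ∨ w.val = n-2
      · rw [if_pos (Or.inr hM), if_pos hM]
        rcases hM with h'|h'|h'
        · rw [show w = ⟨n-6, by omega⟩ from Fin.ext h',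
            (hpath (n-6) (Or.inl rfl) (by omega) (by omega)).1]
        · rw [show w = ⟨n-4, by omega⟩ from Fin.ext h',
            (hpath (n-4) (Or.inr (Or.inl rfl)) (by omega) (by omega)).1]
        · rw [show w = ⟨n-2, by omega⟩ from Fin.ext h',
            (hpath (n-2) (Or.inr (Or.inr rfl)) (by omega) (by omega)).1]
      · rw [if_neg (by tauto), if_neg hM]
  field_simp at hc
  have key : (μ ^ 3 - (n:ℝ) * μ ^ 2 + (3 * (n:ℝ) - 8) * μ - (n:ℝ)) * (μ * x ⟨0, ht0⟩) = 0 := by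
    linear_combination (-x ⟨0, ht0⟩) * hc
  rcases mul_eq_zero.1 key with hk | hk
  · exact hk
  · rcases mul_eq_zero.1 hk with hk' | hk'
    · linarith
    · exact absurd hk' hz0
end QS3

/-- Lemma 2.4(i): the `Q`-index of `S_{n,3}` is the largest real root of
`φ₁(x,n) = x³ - n x² + (3n - 8) x - n`. -/
theorem qIndex_S3_largest_root (n : ℕ) (hn : 8 ≤ n) :
    IsGreatest {x : ℝ | x ^ 3 - (n : ℝ) * x ^ 2 + (3 * (n : ℝ) - 8) * x - (n : ℝ) = 0}
      (qIndex (graphS3 n)) := by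
  have hN : (8:ℝ) ≤ (n:ℝ) := by exact_mod_cast hn
  set R : Set ℝ := {x : ℝ | x ^ 3 - (n : ℝ) * x ^ 2 + (3 * (n : ℝ) - 8) * x - (n : ℝ) = 0}
    with hR
  have hx0 : ∃ x : ℝ, x ∈ R ∧ (n:ℝ) - 3 ≤ x ∧ x ≤ (n:ℝ) - 1 := by
    have hc : ContinuousOn (fun x : ℝ => x^3 - (n:ℝ)*x^2 + (3*(n:ℝ)-8)*x - (n:ℝ))
        (Set.Icc ((n:ℝ)-3) ((n:ℝ)-1)) := by fun_prop
    have h := intermediate_value_Icc (by linarith : (n:ℝ)-3 ≤ (n:ℝ)-1) hc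
    have h0 : (0:ℝ) ∈ Set.Icc
        ((fun x : ℝ => x^3 - (n:ℝ)*x^2 + (3*(n:ℝ)-8)*x - (n:ℝ)) ((n:ℝ)-3))
        ((fun x : ℝ => x^3 - (n:ℝ)*x^2 + (3*(n:ℝ)-8)*x - (n:ℝ)) ((n:ℝ)-1)) := by
      constructor
      · show ((n:ℝ)-3)^3 - (n:ℝ)*((n:ℝ)-3)^2 + (3*(n:ℝ)-8)*((n:ℝ)-3) - (n:ℝ) ≤ 0
        nlinarith
      · show (0:ℝ) ≤ ((n:ℝ)-1)^3 - (n:ℝ)*((n:ℝ)-1)^2 + (3*(n:ℝ)-8)*((n:ℝ)-1) - (n:ℝ)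
        nlinarith
    obtain ⟨y, hy, hfy⟩ := h h0
    refine ⟨y, ?_, hy.1, hy.2⟩
    show y^3 - (n:ℝ)*y^2 + (3*(n:ℝ)-8)*y - (n:ℝ) = 0
    convert hfy using 2 <;> ring
  obtain ⟨x₀, hx₀R, hx₀l, hx₀u⟩ := hx0
  have hbdd : BddAbove R := by
    refine ⟨(n:ℝ), fun y hy => ?_⟩
    by_contra hlt
    push_neg at hlt
    have hyR : y^3 - (n:ℝ)*y^2 + (3*(n:ℝ)-8)*y - (n:ℝ) = 0 := hy
    have hy1 : (0:ℝ) < y - (n:ℝ) := by linarith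
    have hy2 : (0:ℝ) < y := by linarith
    nlinarith [mul_pos (mul_pos hy2 hy2) hy1, mul_pos hy1 hy2,
      mul_pos (by linarith : (0:ℝ) < 3*(n:ℝ)-8) hy2]
  have hclosed : IsClosed R := by
    rw [hR]
    exact isClosed_eq (by fun_prop) continuous_const
  have hrR : sSup R ∈ R := hclosed.csSup_mem ⟨x₀, hx₀R⟩ hbdd
  have hrlb : (n:ℝ) - 3 ≤ sSup R := le_trans hx₀l (le_csSup hbdd hx₀R)
  have hr3 : 3 < sSup R := by linarith
  have hrS : ∃ x : Fin n → ℝ, x ≠ 0 ∧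
      (signlessLaplacian (graphS3 n)).mulVec x = (sSup R) • x :=
    QS3.mem_eig hn (sSup R) hr3 hrR
  have hub : ∀ μ ∈ {μ : ℝ | ∃ x : Fin n → ℝ, x ≠ 0 ∧
      (signlessLaplacian (graphS3 n)).mulVec x = μ • x}, μ ≤ sSup R := by
    intro μ hμ
    obtain ⟨x, hx1, hx2⟩ := hμ
    rcases QS3.eig_bound hn μ x hx1 hx2 with h | h
    · linarith
    · exact le_csSup hbdd h
  have hq : qIndex (graphS3 n) = sSup R := by
    rw [qIndex]
    exact le_antisymm (csSup_le ⟨sSup R, hrS⟩ hub) (le_csSup ⟨sSup R, hub⟩ hrS)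
  constructor
  · rw [hq]; exact hrR
  · intro y hy
    rw [hq]
    exact le_csSup hbdd hy
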